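/- Let N ≤ Perm(X) be a regular subgroup, let N' = Cent_{Perm(X)}(N) be its centralizer in Perm(X), and let f : X → E. Then the family of functions (y ↦ f(η(y))), indexed by η ∈ N, is linearly independent over E if and only if the family of functions (y ↦ f(η'(y))), indexed by η' ∈ N', is linearly independent over E. (The determinant identity det T_N(x) = det T_{N'}(x) at the heart of the proof of Theorem 1.1.) -/

import Mathlib

/-- The determinant identity `det T_N(x) = det T_{N'}(x)` at the heart of the proof of
Theorem 1.1, stated via linear independence: for a regular subgroup `N ≤ Perm X` (`X` finite
nonempty) with centralizer `N' = Cent_{Perm X}(N)` and `f : X → E`, the family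
`(y ↦ f (η y))_{η ∈ N}` is linearly independent over `E` if and only if the family
`(y ↦ f (η' y))_{η' ∈ N'}` is linearly independent over `E`. -/
theorem linearIndependent_iff_linearIndependent_centralizer
    {X E : Type*} [Fintype X] [Nonempty X] [Field E]
    (N : Subgroup (Equiv.Perm X))
    (htrans : ∀ y z : X, ∃ η ∈ N, η y = z)
    (hcard : Nat.card N = Nat.card X)
    (f : X → E) :
    LinearIndependent E (fun η : ↥N => (fun y : X => f ((η : Equiv.Perm X) y))) ↔
      LinearIndependent E
        (fun η' : ↥(Subgroup.centralizer (N : Set (Equiv.Perm X))) =>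
          (fun y : X => f ((η' : Equiv.Perm X) y))) := by
  classical
  obtain ⟨x₀⟩ := ‹Nonempty X›
  have hN : Finite ↥N := Subtype.finite
  have hNf : Fintype ↥N := Fintype.ofFinite _
  -- evaluation at x₀ is a bijection N ≃ X
  have hsurj : Function.Surjective (fun η : ↥N => (η : Equiv.Perm X) x₀) := by
    intro z
    obtain ⟨η, hη, hηz⟩ := htrans x₀ z
    exact ⟨⟨η, hη⟩, hηz⟩
  have hbij : Function.Bijective (fun η : ↥N => (η : Equiv.Perm X) x₀) := by
    rw [Fintype.bijective_iff_surjective_and_card]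
    refine ⟨hsurj, ?_⟩
    rw [← Nat.card_eq_fintype_card, ← Nat.card_eq_fintype_card, hcard]
  let e : ↥N ≃ X := Equiv.ofBijective _ hbij
  have he : ∀ η : ↥N, e η = (η : Equiv.Perm X) x₀ := fun η => rfl
  have hesymm : ∀ (τ : ↥N) (y : X), e.symm ((τ : Equiv.Perm X) y) = τ * e.symm y := by
    intro τ y
    apply e.injective
    rw [Equiv.apply_symm_apply, he, Subgroup.coe_mul, Equiv.Perm.mul_apply]
    congr 1
    exact ((he _).symm.trans (e.apply_symm_apply y)).symm
  -- the anti-homomorphism ν ↦ r ν into the centralizer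
  let r : ↥N → Equiv.Perm X := fun ν => (e.symm.trans (Equiv.mulRight ν)).trans e
  have hr : ∀ (ν : ↥N) (y : X), r ν y = e (e.symm y * ν) := fun ν y => rfl
  have hrmem : ∀ ν : ↥N, r ν ∈ Subgroup.centralizer (N : Set (Equiv.Perm X)) := by
    intro ν
    rw [Subgroup.mem_centralizer_iff]
    intro g hg
    ext y
    simp only [Equiv.Perm.mul_apply, hr, hesymm ⟨g, hg⟩ y, mul_assoc, he,
      Subgroup.coe_mul, Equiv.Perm.mul_apply]
  let E2 : ↥N ≃ ↥(Subgroup.centralizer (N : Set (Equiv.Perm X))) :=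
    { toFun := fun ν => ⟨r ν, hrmem ν⟩
      invFun := fun η' => e.symm ((η' : Equiv.Perm X) x₀)
      left_inv := by
        intro ν
        apply e.injective
        rw [Equiv.apply_symm_apply, hr, he]
        congr 1
        have : e.symm x₀ = (1 : ↥N) := by
          apply e.injective
          rw [Equiv.apply_symm_apply, he]; rfl
        rw [this, one_mul]
      right_inv := by
        intro η'
        ext y
        simp only
        rw [hr, he, Subgroup.coe_mul, Equiv.Perm.mul_apply]
        have h1 : ((e.symm ((η' : Equiv.Perm X) x₀) : ↥N) : Equiv.Perm X) x₀
            = (η' : Equiv.Perm X) x₀ := (he _).symm.trans (e.apply_symm_apply _)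
        rw [h1]
        have hcomm := Subgroup.mem_centralizer_iff.mp η'.2
          ((e.symm y : ↥N) : Equiv.Perm X) (e.symm y).2
        have h2 := congrArg (fun p : Equiv.Perm X => p x₀) hcomm
        simp only [Equiv.Perm.mul_apply] at h2
        rw [h2]
        congr 1
        exact (he _).symm.trans (e.apply_symm_apply y) }
  -- the matrix
  let M : Matrix ↥N ↥N E := fun η σ => f (e (η * σ))
  -- connect family over N with rows of M
  let L : (↥N → E) ≃ₗ[E] (X → E) := LinearEquiv.funCongrLeft E E e.symm
  have hL : ∀ (v : ↥N → E) (y : X), L v y = v (e.symm y) := fun v y => rfl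
  have hgM : (fun η : ↥N => (fun y : X => f ((η : Equiv.Perm X) y)))
      = (⇑L.toLinearMap ∘ fun η : ↥N => M η) := by
    funext η
    ext y
    show f ((η : Equiv.Perm X) y) = f (e (η * e.symm y))
    rw [he, Subgroup.coe_mul, Equiv.Perm.mul_apply]
    congr 2
    exact ((he _).symm.trans (e.apply_symm_apply y)).symm
  have hhM : ((fun η' : ↥(Subgroup.centralizer (N : Set (Equiv.Perm X))) =>
        (fun y : X => f ((η' : Equiv.Perm X) y))) ∘ E2)
      = (⇑L.toLinearMap ∘ fun ν : ↥N => M.transpose ν) := by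
    funext ν
    ext y
    show f (r ν y) = f (e (e.symm y * ν))
    rw [hr]
  rw [hgM, L.toLinearMap.linearIndependent_iff L.ker,
    (show LinearIndependent E (fun η => M η) ↔ IsUnit M from
      Matrix.linearIndependent_rows_iff_isUnit),
    ← linearIndependent_equiv E2, hhM, L.toLinearMap.linearIndependent_iff L.ker,
    (show LinearIndependent E (fun ν => M.transpose ν) ↔ IsUnit M from
      Matrix.linearIndependent_cols_iff_isUnit)]
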